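/- Assume the Setup (Section 2) with conditions (sing), (main0), (main1). Suppose that for every Hilbert space K, every unitary U on K, and every bounded X : H → K with X T = U X one has sup_{n≥0} ‖X|_{H_n}‖‖Q_n‖ < ∞. Suppose there exists a bounded X_T : H → K₀ with X_T T = U₀ X_T such that, with δ_n = inf{‖X_T x‖/‖x‖ : 0 ≠ x ∈ H_n}, one has inf_{n≥0} δ_n ‖Q_n‖ > 0. Then (X_T, U₀|_{clos(X_T H)}) is a unitary asymptote of T. -/

import Mathlib

noncomputable section
set_option linter.unusedSectionVars false
open scoped ENNReal InnerProductSpace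
open ContinuousLinearMap

/-- A bounded operator `V` is an isometry. -/
def IsIsometryOp {K : Type} [NormedAddCommGroup K] [InnerProductSpace ℂ K]
    (V : K →L[ℂ] K) : Prop :=
  ∀ x, ‖V x‖ = ‖x‖

/-- A bounded operator `V` is unitary: an isometry onto. -/
def IsUnitaryOp {K : Type} [NormedAddCommGroup K] [InnerProductSpace ℂ K]
    (V : K →L[ℂ] K) : Prop :=
  (∀ x, ‖V x‖ = ‖x‖) ∧ Function.Surjective V

/-- `(X, U)` is a unitary asymptote of `T`: `U` is unitary, `X` intertwines `T` with `U`,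
the pair is minimal (`⋁_{n ≥ 0} U^{-n} X H = K`), and it has the universal property with
respect to every pair `(Y, W)` with `W` unitary on a Hilbert space and `Y T = W Y`. -/
def IsUnitaryAsymptote {H : Type} [NormedAddCommGroup H] [InnerProductSpace ℂ H]
    [CompleteSpace H] (T : H →L[ℂ] H)
    (K : Type) [NormedAddCommGroup K] [InnerProductSpace ℂ K] [CompleteSpace K]
    (X : H →L[ℂ] K) (U : K →L[ℂ] K) : Prop :=
  IsUnitaryOp U ∧ X.comp T = U.comp X ∧
    (Submodule.span ℂ (⋃ n : ℕ, ⇑(U ^ n) ⁻¹' Set.range X)).topologicalClosure = ⊤ ∧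
    ∀ (K' : Type) [NormedAddCommGroup K'] [InnerProductSpace ℂ K'] [CompleteSpace K']
      (W : K' →L[ℂ] K') (Y : H →L[ℂ] K'), IsUnitaryOp W → Y.comp T = W.comp Y →
      ∃! Z : K →L[ℂ] K', Z.comp U = W.comp Z ∧ Y = Z.comp X

private lemma pyth_sum {K' : Type} [NormedAddCommGroup K'] [InnerProductSpace ℂ K']
    (s : Finset ℕ) (v : ℕ → K')
    (horth : ∀ i ∈ s, ∀ j ∈ s, i ≠ j → ⟪v i, v j⟫_ℂ = 0) :
    ‖∑ i ∈ s, v i‖ ^ 2 = ∑ i ∈ s, ‖v i‖ ^ 2 := by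
  rw [norm_sq_eq_re_inner (𝕜 := ℂ), sum_inner]
  have h1 : ∀ i ∈ s, ⟪v i, ∑ j ∈ s, v j⟫_ℂ = ⟪v i, v i⟫_ℂ := by
    intro i hi
    rw [inner_sum]
    exact Finset.sum_eq_single_of_mem i hi (fun j hj hne => horth i hi j hj (Ne.symm hne))
  rw [Finset.sum_congr rfl h1, map_sum]
  exact Finset.sum_congr rfl fun i _ => (norm_sq_eq_re_inner (𝕜 := ℂ) (v i)).symm

set_option maxHeartbeats 2000000 in
/-- Theorem 2.5: sufficient conditions for `(X_T, U₀|_{clos X_T H})` to be a unitary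
asymptote of `T`. -/
theorem canonical_intertwining_is_unitary_asymptote
    {H : Type} [NormedAddCommGroup H] [InnerProductSpace ℂ H] [CompleteSpace H]
    [TopologicalSpace.SeparableSpace H]
    (K0 : ℕ → Type) [∀ n, NormedAddCommGroup (K0 n)] [∀ n, InnerProductSpace ℂ (K0 n)]
    [∀ n, CompleteSpace (K0 n)] [∀ n, TopologicalSpace.SeparableSpace (K0 n)]
    -- the unitaries `U_{0n}`, each reductive, with pairwise singular spectral measures:
    (U0 : ∀ n, K0 n →L[ℂ] K0 n)
    (hU0 : ∀ n, IsUnitaryOp (U0 n))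
    (hU0red : ∀ (n) (F : Submodule ℂ (K0 n)), IsClosed (F : Set (K0 n)) →
      (∀ x ∈ F, U0 n x ∈ F) → ∀ x ∈ F, ContinuousLinearMap.adjoint (U0 n) x ∈ F)
    (hsing : ∀ n k, n ≠ k → ∀ Z : K0 n →L[ℂ] K0 k, Z.comp (U0 n) = (U0 k).comp Z → Z = 0)
    (T : H →L[ℂ] H)
    -- the nonzero closed `T`-invariant subspaces `H_n`:
    (Hn : ℕ → Submodule ℂ H)
    (hHcl : ∀ n, IsClosed ((Hn n : Set H)))
    (hHne : ∀ n, Hn n ≠ ⊥)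
    (hTH : ∀ n, ∀ x ∈ Hn n, T x ∈ Hn n)
    -- `Vn n = ⋁_{k ≠ n} H_k`:
    (Vn : ℕ → Submodule ℂ H)
    (hVn : ∀ n, Vn n = (⨆ k ∈ {k : ℕ | k ≠ n}, Hn k).topologicalClosure)
    -- (main0):
    (hmain0 : ∀ n, Hn n ⊓ Vn n = ⊥ ∧ Hn n ⊔ Vn n = ⊤)
    -- (main1): the invertible intertwiners `X_n : H_n → K_{0n}`:
    (X0 : ∀ n, ↥(Hn n) ≃L[ℂ] K0 n)
    (hX0 : ∀ (n) (x : ↥(Hn n)), X0 n ⟨T ↑x, hTH n ↑x x.2⟩ = U0 n (X0 n x))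
    -- the skew projections `Q_n` onto `H_n` along `⋁_{k ≠ n} H_k`:
    (Q : ℕ → H →L[ℂ] H)
    (hQmem : ∀ n x, Q n x ∈ Hn n)
    (hQid : ∀ n, ∀ x ∈ Hn n, Q n x = x)
    (hQker : ∀ n, ∀ x ∈ Vn n, Q n x = 0)
    -- `U₀ = ⊕_n U_{0n}` acting on the Hilbert direct sum `K₀ = ⊕_n K_{0n} = lp K0 2`:
    (Uz : lp K0 2 →L[ℂ] lp K0 2) (hUzU : IsUnitaryOp Uz)
    (hUz : ∀ (a : lp K0 2) (n : ℕ), (Uz a : ∀ i, K0 i) n = U0 n (a n))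
    -- (xxnqqn) for every intertwining with a unitary:
    (hbound : ∀ (K' : Type) [NormedAddCommGroup K'] [InnerProductSpace ℂ K'] [CompleteSpace K']
      (W : K' →L[ℂ] K') (X : H →L[ℂ] K'), IsUnitaryOp W → X.comp T = W.comp X →
      ∃ C : ℝ, ∀ n, ∀ x ∈ Hn n, ‖X x‖ * ‖Q n‖ ≤ C * ‖x‖)
    -- the candidate canonical intertwining map `X_T`:
    (XT : H →L[ℂ] lp K0 2) (hXT : XT.comp T = Uz.comp XT)
    (hlow : ∃ ε : ℝ, 0 < ε ∧ ∀ n, ∀ x ∈ Hn n, ε * ‖x‖ ≤ ‖XT x‖ * ‖Q n‖) :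
    letI N := (LinearMap.range (↑XT : H →ₗ[ℂ] lp K0 2)).topologicalClosure
    haveI : CompleteSpace ↥N := (Submodule.isClosed_topologicalClosure _).completeSpace_coe
    ∃ (hr : ∀ x : H, XT x ∈ N) (hinv : ∀ y ∈ N, Uz y ∈ N),
      IsUnitaryAsymptote T ↥N (XT.codRestrict N hr)
        ((Uz.comp N.subtypeL).codRestrict N fun y => hinv ↑y y.2) := by
  classical
  obtain ⟨ε, hεpos, hεb⟩ := hlow
  have hp2 : (0:ℝ) < (2:ℝ≥0∞).toReal := by norm_num
  set XTl : H →ₗ[ℂ] lp K0 2 := (↑XT : H →ₗ[ℂ] lp K0 2) with hXTldef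
  set N : Submodule ℂ (lp K0 2) := (LinearMap.range XTl).topologicalClosure with hNdef
  haveI : CompleteSpace ↥N := (Submodule.isClosed_topologicalClosure _).completeSpace_coe
  have hNcl : IsClosed (N : Set (lp K0 2)) := Submodule.isClosed_topologicalClosure _
  have hr : ∀ x : H, XT x ∈ N := fun x =>
    Submodule.le_topologicalClosure _ (LinearMap.mem_range_self XTl x)
  have hUzXT : ∀ x : H, XT (T x) = Uz (XT x) := fun x => ContinuousLinearMap.ext_iff.mp hXT x
  have hNset : (N : Set (lp K0 2)) = closure (Set.range ⇑XT) := by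
    rw [hNdef, Submodule.topologicalClosure_coe]
    congr 1
  have hinv : ∀ y ∈ N, Uz y ∈ N := by
    intro y hy
    have hmt : Set.MapsTo ⇑Uz (Set.range ⇑XT) (Set.range ⇑XT) := by
      rintro _ ⟨x, rfl⟩
      exact ⟨T x, hUzXT x⟩
    have : Uz y ∈ (N : Set (lp K0 2)) := by
      rw [hNset]
      exact map_mem_closure Uz.continuous (by rw [← hNset]; exact hy) hmt
    exact this
  -- adjoint helper for unitary operators
  have hadj : ∀ (K' : Type) [NormedAddCommGroup K'] [InnerProductSpace ℂ K'] [CompleteSpace K']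
      (V : K' →L[ℂ] K'), IsUnitaryOp V →
      (∀ x, ContinuousLinearMap.adjoint V (V x) = x) ∧
        (∀ x, V (ContinuousLinearMap.adjoint V x) = x) := by
    intro K' _ _ _ V hV
    have h1 : ContinuousLinearMap.adjoint V ∘L V = 1 :=
      (ContinuousLinearMap.norm_map_iff_adjoint_comp_self V).mp hV.1
    have h1' : ∀ x, ContinuousLinearMap.adjoint V (V x) = x := by
      intro x
      have := ContinuousLinearMap.ext_iff.mp h1 x
      simpa using this
    refine ⟨h1', fun x => ?_⟩
    obtain ⟨z, rfl⟩ := hV.2 x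
    rw [h1' z]
  -- orthogonality of the images of distinct `H_n` under any intertwiner to a unitary
  have horth : ∀ (K' : Type) [NormedAddCommGroup K'] [InnerProductSpace ℂ K']
      [CompleteSpace K'] (W : K' →L[ℂ] K') (Y : H →L[ℂ] K'), IsUnitaryOp W →
      Y.comp T = W.comp Y →
      ∀ n k, n ≠ k → ∀ x ∈ Hn n, ∀ y ∈ Hn k, ⟪Y x, Y y⟫_ℂ = 0 := by
    intro K' _ _ _ W Y hW hY
    have hWadj := hadj K' W hW
    set Z : ∀ n, K0 n →L[ℂ] K' := fun n =>
      (Y.comp ((Hn n).subtypeL)).comp ((X0 n).symm : K0 n →L[ℂ] ↥(Hn n)) with hZdef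
    have hZap : ∀ n (a : K0 n), Z n a = Y ↑((X0 n).symm a) := fun n a => rfl
    have hZint : ∀ n, (Z n).comp (U0 n) = W.comp (Z n) := by
      intro n
      ext a
      have hx := hX0 n ((X0 n).symm a)
      rw [(X0 n).apply_symm_apply] at hx
      have h2 : ((X0 n).symm (U0 n a) : H) = T ↑((X0 n).symm a) := by
        rw [← hx, (X0 n).symm_apply_apply]
      simp only [comp_apply, hZap]
      rw [h2]
      exact ContinuousLinearMap.ext_iff.mp hY ↑((X0 n).symm a)
    intro n k hnk x hx y hy
    have hWinner : ∀ a c : K', ⟪W a, W c⟫_ℂ = ⟪a, c⟫_ℂ := by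
      intro a c
      rw [← ContinuousLinearMap.adjoint_inner_left W, hWadj.1]
    have hadjint : ∀ u, ContinuousLinearMap.adjoint (Z k) (W u) =
        U0 k (ContinuousLinearMap.adjoint (Z k) u) := by
      intro u
      apply ext_inner_right ℂ
      intro b
      have hb : Z k b = W (Z k (ContinuousLinearMap.adjoint (U0 k) b)) := by
        conv_lhs => rw [← (hadj (K0 k) (U0 k) (hU0 k)).2 b]
        have h5 := ContinuousLinearMap.ext_iff.mp (hZint k)
          (ContinuousLinearMap.adjoint (U0 k) b)
        simpa using h5
      rw [ContinuousLinearMap.adjoint_inner_left, hb, hWinner,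
        ← ContinuousLinearMap.adjoint_inner_right, ContinuousLinearMap.adjoint_inner_left]
    have hZZ : ((ContinuousLinearMap.adjoint (Z k)).comp (Z n)).comp (U0 n) =
        (U0 k).comp ((ContinuousLinearMap.adjoint (Z k)).comp (Z n)) := by
      ext a
      simp only [comp_apply]
      have h6 := ContinuousLinearMap.ext_iff.mp (hZint n) a
      simp only [comp_apply] at h6
      rw [h6]
      exact hadjint (Z n a)
    have hZ0 := hsing n k hnk _ hZZ
    have hxY : Y x = Z n (X0 n ⟨x, hx⟩) := by
      rw [hZap, (X0 n).symm_apply_apply]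
    have hyY : Y y = Z k (X0 k ⟨y, hy⟩) := by
      rw [hZap, (X0 k).symm_apply_apply]
    rw [hxY, hyY, ← ContinuousLinearMap.adjoint_inner_left (Z k)]
    have hz0 : ContinuousLinearMap.adjoint (Z k) (Z n (X0 n ⟨x, hx⟩)) = 0 := by
      have := ContinuousLinearMap.ext_iff.mp hZ0 (X0 n ⟨x, hx⟩)
      simpa using this
    rw [hz0, inner_zero_left]
  -- lp helpers
  have hproj : ∀ k : ℕ, ∃ P : lp K0 2 →L[ℂ] K0 k, ∀ a : lp K0 2, P a = (a : ∀ i, K0 i) k := by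
    intro k
    refine ⟨LinearMap.mkContinuous
      { toFun := fun a : lp K0 2 => (a : ∀ i, K0 i) k
        map_add' := fun a b => by simp [lp.coeFn_add]
        map_smul' := fun c a => by simp [lp.coeFn_smul] } 1 (fun a => by
          simp only [LinearMap.coe_mk, AddHom.coe_mk, one_mul]; exact lp.norm_apply_le_norm (by norm_num) a k), fun a => rfl⟩
  have hsgl_norm : ∀ (n : ℕ) (b : K0 n), ‖lp.single 2 n b‖ = ‖b‖ := by
    intro n b
    exact lp.norm_single (by norm_num) n b
  have hsgl_add : ∀ (n : ℕ) (b c : K0 n),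
      lp.single 2 n (b + c) = lp.single 2 n b + lp.single 2 n c := by
    intro n b c
    apply lp.ext
    rw [lp.coeFn_add]
    funext j
    rcases eq_or_ne j n with rfl | hj
    · rw [Pi.add_apply, lp.single_apply_self, lp.single_apply_self, lp.single_apply_self]
    · rw [Pi.add_apply, lp.single_apply_ne _ _ _ hj, lp.single_apply_ne _ _ _ hj,
        lp.single_apply_ne _ _ _ hj, add_zero]
  have hsglL : ∀ n : ℕ, ∃ S : K0 n →L[ℂ] lp K0 2, ∀ b, S b = lp.single 2 n b := by
    intro n
    refine ⟨LinearMap.mkContinuous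
      { toFun := lp.single 2 n
        map_add' := hsgl_add n
        map_smul' := fun c b => by simp [lp.single_smul 2 n c b] } 1
      (fun b => by simp only [LinearMap.coe_mk, AddHom.coe_mk]; rw [hsgl_norm n b, one_mul]),
      fun b => rfl⟩
  have hUzsingle : ∀ (n : ℕ) (b : K0 n),
      Uz (lp.single 2 n b) = lp.single 2 n (U0 n b) := by
    intro n b
    apply lp.ext
    funext j
    have h := hUz (lp.single 2 n b) j
    rcases eq_or_ne j n with rfl | hj
    · rw [h, lp.single_apply_self, lp.single_apply_self]
    · rw [h, lp.single_apply_ne _ _ _ hj, lp.single_apply_ne _ _ _ hj, map_zero]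
  -- coordinates of `XT x`, `x ∈ H_n`, vanish away from `n`
  have hcoord : ∀ (n k : ℕ), k ≠ n → ∀ x ∈ Hn n, (XT x : ∀ i, K0 i) k = 0 := by
    intro n k hk
    obtain ⟨P, hP⟩ := hproj k
    set S : K0 n →L[ℂ] K0 k :=
      (P.comp (XT.comp ((Hn n).subtypeL))).comp ((X0 n).symm : K0 n →L[ℂ] ↥(Hn n)) with hSdef
    have hSap : ∀ a, S a = (XT ↑((X0 n).symm a) : ∀ i, K0 i) k := by
      intro a
      simp [hSdef, hP]
    have hSint : S.comp (U0 n) = (U0 k).comp S := by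
      ext a
      have hx := hX0 n ((X0 n).symm a)
      rw [(X0 n).apply_symm_apply] at hx
      have h2 : ((X0 n).symm (U0 n a) : H) = T ↑((X0 n).symm a) := by
        rw [← hx, (X0 n).symm_apply_apply]
      simp only [comp_apply]
      rw [hSap, hSap, h2, hUzXT]
      exact hUz _ k
    have hS0 := hsing n k (Ne.symm hk) S hSint
    intro x hx
    have hz : S (X0 n ⟨x, hx⟩) = 0 := by rw [hS0]; rfl
    rw [hSap, (X0 n).symm_apply_apply] at hz
    exact hz
  -- the key reductivity step
  have hCn : ∀ n : ℕ, ∀ x ∈ Hn n, ∃ z ∈ N, Uz z = XT x := by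
    intro n
    obtain ⟨Sg, hSg⟩ := hsglL n
    set Cn : Submodule ℂ (lp K0 2) := ((Hn n).map XTl).topologicalClosure with hCndef
    have hCncl : IsClosed (Cn : Set (lp K0 2)) := Submodule.isClosed_topologicalClosure _
    have hCnN : Cn ≤ N := by
      apply Submodule.topologicalClosure_mono
      rintro _ ⟨x, hx, rfl⟩
      exact ⟨x, rfl⟩
    have hCnset : (Cn : Set (lp K0 2)) = closure (⇑XT '' (Hn n : Set H)) := by
      rw [hCndef, Submodule.topologicalClosure_coe, Submodule.map_coe]
      rfl
    have hbase : ∀ x ∈ Hn n, XT x ∈ Cn := fun x hx =>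
      Submodule.le_topologicalClosure _ ⟨x, hx, rfl⟩
    have hCnUz : ∀ a ∈ Cn, Uz a ∈ Cn := by
      intro a ha
      have : Uz a ∈ (Cn : Set (lp K0 2)) := by
        rw [hCnset]
        refine map_mem_closure (t := ⇑XT '' (Hn n : Set H)) Uz.continuous
          (show a ∈ closure (⇑XT '' (Hn n : Set H)) by rw [← hCnset]; exact ha) ?_
        rintro _ ⟨x, hx, rfl⟩
        exact ⟨T x, hTH n x hx, hUzXT x⟩
      exact this
    have hCnvan : ∀ a ∈ Cn, ∀ k, k ≠ n → (a : ∀ i, K0 i) k = 0 := by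
      intro a ha k hk
      obtain ⟨P, hP⟩ := hproj k
      have hcl : IsClosed {b : lp K0 2 | P b = 0} := isClosed_eq P.continuous continuous_const
      have hsub : ⇑XT '' (Hn n : Set H) ⊆ {b : lp K0 2 | P b = 0} := by
        rintro _ ⟨x, hx, rfl⟩
        show P (XT x) = 0
        rw [hP]
        exact hcoord n k hk x hx
      have ha' : a ∈ closure (⇑XT '' (Hn n : Set H)) := by rw [← hCnset]; exact ha
      have := closure_minimal hsub hcl ha'
      have hPa : P a = 0 := this
      rwa [hP] at hPa
    have hsglCn : ∀ a ∈ Cn, lp.single 2 n ((a : ∀ i, K0 i) n) = a := by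
      intro a ha
      apply lp.ext
      funext j
      rcases eq_or_ne j n with rfl | hj
      · rw [lp.single_apply_self]
      · rw [lp.single_apply_ne _ _ _ hj, hCnvan a ha j hj]
    set F : Submodule ℂ (K0 n) := Cn.comap (Sg : K0 n →ₗ[ℂ] lp K0 2) with hFdef
    have hFmem : ∀ b : K0 n, b ∈ F ↔ Sg b ∈ Cn := fun b => Iff.rfl
    have hFcl : IsClosed (F : Set (K0 n)) := by
      have hFset : (F : Set (K0 n)) = ⇑Sg ⁻¹' (Cn : Set (lp K0 2)) := rfl
      rw [hFset]
      exact hCncl.preimage Sg.continuous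
    have hFU0 : ∀ b ∈ F, U0 n b ∈ F := by
      intro b hb
      have hb' : Sg b ∈ Cn := hb
      rw [hFmem, hSg, ← hUzsingle, ← hSg]
      exact hCnUz _ hb'
    have hFadj := hU0red n F hFcl hFU0
    intro x hx
    have ha : XT x ∈ Cn := hbase x hx
    have hbF : ((XT x : ∀ i, K0 i) n) ∈ F := by
      rw [hFmem, hSg, hsglCn _ ha]
      exact ha
    have hcF := hFadj _ hbF
    have hzC : Sg (ContinuousLinearMap.adjoint (U0 n) ((XT x : ∀ i, K0 i) n)) ∈ Cn := hcF
    refine ⟨Sg (ContinuousLinearMap.adjoint (U0 n) ((XT x : ∀ i, K0 i) n)), hCnN hzC, ?_⟩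
    rw [hSg, hUzsingle, (hadj (K0 n) (U0 n) (hU0 n)).2]
    exact hsglCn _ ha
  -- inverse of Uz as a linear isometry equivalence
  set li : lp K0 2 ≃ₗᵢ[ℂ] lp K0 2 :=
    LinearIsometryEquiv.ofSurjective
      (⟨(↑Uz : lp K0 2 →ₗ[ℂ] lp K0 2), hUzU.1⟩ : lp K0 2 →ₗᵢ[ℂ] lp K0 2) hUzU.2 with hlidef
  have hliap : ∀ a, li a = Uz a := by
    intro a
    rw [hlidef]
    exact congrFun (LinearIsometryEquiv.coe_ofSurjective _ _) a
  set Gsub : Submodule ℂ (lp K0 2) :=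
    N.comap (li.symm.toLinearEquiv : lp K0 2 →ₗ[ℂ] lp K0 2) with hGdef
  have hGmem : ∀ a : lp K0 2, a ∈ Gsub ↔ li.symm a ∈ N := fun a => Iff.rfl
  have hGcl : IsClosed (Gsub : Set (lp K0 2)) := by
    have hGset : (Gsub : Set (lp K0 2)) = ⇑li.symm ⁻¹' (N : Set (lp K0 2)) := rfl
    rw [hGset]
    exact hNcl.preimage li.symm.continuous
  have hMleG : ∀ n : ℕ, ∀ x ∈ Hn n, XT x ∈ Gsub := by
    intro n x hx
    obtain ⟨z, hz, hzeq⟩ := hCn n x hx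
    rw [hGmem, ← hzeq, ← hliap z, li.symm_apply_apply]
    exact hz
  have hMdense : Dense ((⨆ n, Hn n : Submodule ℂ H) : Set H) := by
    rw [Submodule.dense_iff_topologicalClosure_eq_top, eq_top_iff, ← (hmain0 0).2]
    apply sup_le
    · exact le_trans (le_iSup Hn 0) (Submodule.le_topologicalClosure _)
    · rw [hVn 0]
      apply Submodule.topologicalClosure_mono
      exact iSup₂_le fun k _ => le_iSup Hn k
  have hallG : ∀ x : H, XT x ∈ Gsub := by
    intro x
    have hxcl : x ∈ closure ((⨆ n, Hn n : Submodule ℂ H) : Set H) := hMdense x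
    have h9 : XT x ∈ closure (⇑XT '' ((⨆ n, Hn n : Submodule ℂ H) : Set H)) :=
      map_mem_closure XT.continuous hxcl (Set.mapsTo_image _ _)
    have hsuple : (⨆ n, Hn n : Submodule ℂ H) ≤ Gsub.comap XTl :=
      iSup_le fun n x hx => hMleG n x hx
    have h10 : ⇑XT '' ((⨆ n, Hn n : Submodule ℂ H) : Set H) ⊆ (Gsub : Set (lp K0 2)) := by
      rintro _ ⟨m, hm, rfl⟩
      exact hsuple hm
    exact closure_minimal h10 hGcl h9
  have hNsurj : ∀ y ∈ N, ∃ z ∈ N, Uz z = y := by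
    intro y hy
    have hNG : (N : Set (lp K0 2)) ⊆ (Gsub : Set (lp K0 2)) := by
      rw [hNset]
      apply closure_minimal ?_ hGcl
      rintro _ ⟨x, rfl⟩
      exact hallG x
    have hyG : y ∈ Gsub := hNG hy
    exact ⟨li.symm y, (hGmem y).mp hyG, by rw [← hliap, li.apply_symm_apply]⟩
  -- density of the canonical image in N
  have hdenseX : Dense (Set.range fun x : H => (⟨XT x, hr x⟩ : ↥N)) := by
    intro y
    apply closure_subtype.mpr
    have himg : (Subtype.val '' Set.range fun x : H => (⟨XT x, hr x⟩ : ↥N))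
        = Set.range ⇑XT := by
      ext a
      constructor
      · rintro ⟨q, ⟨x, rfl⟩, rfl⟩
        exact ⟨x, rfl⟩
      · rintro ⟨x, rfl⟩
        exact ⟨⟨XT x, hr x⟩, ⟨x, rfl⟩, rfl⟩
    rw [himg]
    have hy2 : (y : lp K0 2) ∈ closure (Set.range ⇑XT) := by
      rw [← hNset]
      exact y.2
    exact hy2
  refine ⟨hr, hinv, ?_, ?_, ?_, ?_⟩
  · -- IsUnitaryOp of the restriction
    constructor
    · intro y
      have hval : (((Uz.comp N.subtypeL).codRestrict N fun y => hinv ↑y y.2) y : lp K0 2)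
          = Uz ↑y := rfl
      calc ‖((Uz.comp N.subtypeL).codRestrict N fun y => hinv ↑y y.2) y‖
          = ‖Uz (↑y : lp K0 2)‖ := by rw [← hval]; rfl
        _ = ‖(↑y : lp K0 2)‖ := hUzU.1 _
        _ = ‖y‖ := rfl
    · intro y
      obtain ⟨z, hz, hzeq⟩ := hNsurj ↑y y.2
      exact ⟨⟨z, hz⟩, Subtype.ext hzeq⟩
  · -- intertwining
    refine ContinuousLinearMap.ext fun x => ?_
    apply Subtype.ext
    show XT (T x) = Uz (XT x)
    exact hUzXT x
  · -- minimality
    rw [← Submodule.dense_iff_topologicalClosure_eq_top]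
    have hXfun : ⇑(XT.codRestrict N hr) = fun x : H => (⟨XT x, hr x⟩ : ↥N) := by
      funext x
      apply Subtype.ext
      rfl
    have hsub : (Set.range fun x : H => (⟨XT x, hr x⟩ : ↥N)) ⊆
        ↑(Submodule.span ℂ (⋃ n : ℕ,
          ⇑(((Uz.comp N.subtypeL).codRestrict N fun y => hinv ↑y y.2) ^ n) ⁻¹'
            Set.range ⇑(XT.codRestrict N hr))) := by
      rintro _ ⟨x, rfl⟩
      apply Submodule.subset_span
      refine Set.mem_iUnion.mpr ⟨0, ?_⟩
      rw [Set.mem_preimage, pow_zero]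
      refine ⟨x, ?_⟩
      rw [hXfun]
      rfl
    exact Dense.mono hsub hdenseX
  · -- universal property
    intro K' _ _ _ W Y hW hY
    obtain ⟨C, hC⟩ := hbound K' W Y hW hY
    set c : ℝ := max C 0 / ε with hcdef
    have hc0 : (0:ℝ) ≤ c := div_nonneg (le_max_right C 0) hεpos.le
    have hQpos : ∀ n, (1:ℝ) ≤ ‖Q n‖ := by
      intro n
      obtain ⟨x₀, hx₀m, hx₀⟩ := (Submodule.ne_bot_iff (Hn n)).mp (hHne n)
      have h1 := (Q n).le_opNorm x₀
      rw [hQid n x₀ hx₀m] at h1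
      exact (le_mul_iff_one_le_left (norm_pos_iff.mpr hx₀)).mp h1
    have hpiece : ∀ n, ∀ x ∈ Hn n, ‖Y x‖ ≤ c * ‖XT x‖ := by
      intro n x hx
      have h1 := hC n x hx
      have h2 := hεb n x hx
      have hq : (0:ℝ) < ‖Q n‖ := lt_of_lt_of_le one_pos (hQpos n)
      have h3 : ‖Y x‖ * ‖Q n‖ ≤ max C 0 * ‖x‖ :=
        h1.trans (mul_le_mul_of_nonneg_right (le_max_left C 0) (norm_nonneg x))
      have h4 : (ε * ‖Y x‖) * ‖Q n‖ ≤ (max C 0 * ‖XT x‖) * ‖Q n‖ := by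
        calc (ε * ‖Y x‖) * ‖Q n‖ = ε * (‖Y x‖ * ‖Q n‖) := by ring
          _ ≤ ε * (max C 0 * ‖x‖) := mul_le_mul_of_nonneg_left h3 hεpos.le
          _ = max C 0 * (ε * ‖x‖) := by ring
          _ ≤ max C 0 * (‖XT x‖ * ‖Q n‖) := mul_le_mul_of_nonneg_left h2 (le_max_right C 0)
          _ = (max C 0 * ‖XT x‖) * ‖Q n‖ := by ring
      have h5 : ε * ‖Y x‖ ≤ max C 0 * ‖XT x‖ := le_of_mul_le_mul_right h4 hq
      rw [hcdef, div_mul_eq_mul_div, le_div_iff₀ hεpos]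
      linarith
    have hMsub : ∀ x ∈ (⨆ n, Hn n : Submodule ℂ H), ‖Y x‖ ≤ c * ‖XT x‖ := by
      intro x hx
      obtain ⟨f, hf, hfx⟩ := (Submodule.mem_iSup_iff_exists_finsupp Hn x).mp hx
      have hfx' : x = ∑ i ∈ f.support, f i := by rw [← hfx]; rfl
      have hYsum : ‖Y x‖ ^ 2 = ∑ i ∈ f.support, ‖Y (f i)‖ ^ 2 := by
        rw [hfx', map_sum]
        exact pyth_sum _ _ (fun i _ j _ hij =>
          horth K' W Y hW hY i j hij (f i) (hf i) (f j) (hf j))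
      have hXsum : ‖XT x‖ ^ 2 = ∑ i ∈ f.support, ‖XT (f i)‖ ^ 2 := by
        rw [hfx', map_sum]
        exact pyth_sum _ _ (fun i _ j _ hij =>
          horth (lp K0 2) Uz XT hUzU hXT i j hij (f i) (hf i) (f j) (hf j))
      have hle : ‖Y x‖ ^ 2 ≤ (c * ‖XT x‖) ^ 2 := by
        rw [hYsum, mul_pow]
        calc ∑ i ∈ f.support, ‖Y (f i)‖ ^ 2
            ≤ ∑ i ∈ f.support, c ^ 2 * ‖XT (f i)‖ ^ 2 := by
              refine Finset.sum_le_sum fun i _ => ?_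
              have := hpiece i (f i) (hf i)
              calc ‖Y (f i)‖ ^ 2 ≤ (c * ‖XT (f i)‖) ^ 2 := by
                    apply pow_le_pow_left₀ (norm_nonneg _) this
                _ = c ^ 2 * ‖XT (f i)‖ ^ 2 := by ring
          _ = c ^ 2 * ∑ i ∈ f.support, ‖XT (f i)‖ ^ 2 := by rw [Finset.mul_sum]
          _ = c ^ 2 * ‖XT x‖ ^ 2 := by rw [hXsum]
      have h0 : (0:ℝ) ≤ c * ‖XT x‖ := mul_nonneg hc0 (norm_nonneg _)
      exact (pow_le_pow_iff_left₀ (norm_nonneg _) h0 (by norm_num)).mp hle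
    have hYall : ∀ x : H, ‖Y x‖ ≤ c * ‖XT x‖ := by
      intro x
      have hEcl : IsClosed {x : H | ‖Y x‖ ≤ c * ‖XT x‖} :=
        isClosed_le Y.continuous.norm (continuous_const.mul XT.continuous.norm)
      have hsubE : ((⨆ n, Hn n : Submodule ℂ H) : Set H) ⊆ {x : H | ‖Y x‖ ≤ c * ‖XT x‖} :=
        fun m hm => hMsub m hm
      exact closure_minimal hsubE hEcl (hMdense x)
    have hker : ∀ x x' : H, XT x = XT x' → Y x = Y x' := by
      intro x x' hxx
      have h1 := hYall (x - x')
      rw [map_sub, map_sub, hxx, sub_self, norm_zero, mul_zero] at h1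
      exact sub_eq_zero.mp (norm_le_zero_iff.mp h1)
    -- build the factor map
    have hpick : ∀ p : ↥(LinearMap.range XTl), ∃ x : H, XT x = ↑p := by
      intro p
      obtain ⟨x, hx⟩ := LinearMap.mem_range.mp p.2
      exact ⟨x, hx⟩
    set pick : ↥(LinearMap.range XTl) → H := fun p => (hpick p).choose with hpickdef
    have hpickeq : ∀ p, XT (pick p) = ↑p := fun p => (hpick p).choose_spec
    set g0 : ↥(LinearMap.range XTl) →ₗ[ℂ] K' :=
      { toFun := fun p => Y (pick p)
        map_add' := by
          intro p q
          have hxe : XT (pick (p + q)) = XT (pick p + pick q) := by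
            rw [hpickeq, map_add, hpickeq, hpickeq]
            rfl
          show Y (pick (p + q)) = Y (pick p) + Y (pick q)
          rw [hker _ _ hxe, map_add]
        map_smul' := by
          intro a p
          have hxe : XT (pick (a • p)) = XT (a • pick p) := by
            rw [hpickeq, map_smul, hpickeq]
            rfl
          show Y (pick (a • p)) = (RingHom.id ℂ) a • Y (pick p)
          rw [hker _ _ hxe, map_smul]
          rfl } with hg0def
    have hg0ap : ∀ p, g0 p = Y (pick p) := fun p => rfl
    have hg0b : ∀ p, ‖g0 p‖ ≤ c * ‖p‖ := by
      intro p
      rw [hg0ap]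
      calc ‖Y (pick p)‖ ≤ c * ‖XT (pick p)‖ := hYall _
        _ = c * ‖p‖ := by rw [hpickeq]; rfl
    set Z0 : ↥(LinearMap.range XTl) →L[ℂ] K' := LinearMap.mkContinuous g0 c hg0b with hZ0def
    have hRN : LinearMap.range XTl ≤ N := Submodule.le_topologicalClosure _
    set eli : ↥(LinearMap.range XTl) →ₗᵢ[ℂ] ↥N :=
      ⟨Submodule.inclusion hRN, fun x => rfl⟩ with helidef
    set e : ↥(LinearMap.range XTl) →L[ℂ] ↥N := eli.toContinuousLinearMap with hedef
    have h_e : IsUniformInducing e := eli.isometry.isUniformInducing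
    have h_dense : DenseRange e := by
      have hsub : (Set.range fun x : H => (⟨XT x, hr x⟩ : ↥N)) ⊆ Set.range ⇑e := by
        rintro _ ⟨x, rfl⟩
        exact ⟨⟨XT x, LinearMap.mem_range_self XTl x⟩, rfl⟩
      exact Dense.mono hsub hdenseX
    set Zext : ↥N →L[ℂ] K' := Z0.extend e with hZextdef
    have hZkey : ∀ x : H, Zext (⟨XT x, hr x⟩ : ↥N) = Y x := by
      intro x
      have h7 : (⟨XT x, hr x⟩ : ↥N) = e ⟨XT x, LinearMap.mem_range_self XTl x⟩ := rfl
      rw [h7, hZextdef, ContinuousLinearMap.extend_eq (h_dense := h_dense) (h_e := h_e)]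
      show Y (pick _) = Y x
      exact hker _ _ (hpickeq _)
    have hXfun : ⇑(XT.codRestrict N hr) = fun x : H => (⟨XT x, hr x⟩ : ↥N) := by
      funext x
      apply Subtype.ext
      rfl
    have hdenseX' : Dense (Set.range ⇑(XT.codRestrict N hr)) := by
      rw [hXfun]
      exact hdenseX
    refine ⟨Zext, ⟨?_, ?_⟩, ?_⟩
    · -- Zext intertwines
      have heq : Set.EqOn (⇑(Zext.comp ((Uz.comp N.subtypeL).codRestrict N
          fun y => hinv ↑y y.2))) (⇑(W.comp Zext)) (Set.range ⇑(XT.codRestrict N hr)) := by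
        rintro _ ⟨x, rfl⟩
        have hU'X : ((Uz.comp N.subtypeL).codRestrict N fun y => hinv ↑y y.2)
            ((XT.codRestrict N hr) x) = (XT.codRestrict N hr) (T x) := by
          apply Subtype.ext
          show Uz (XT x) = XT (T x)
          exact (hUzXT x).symm
        show Zext (((Uz.comp N.subtypeL).codRestrict N fun y => hinv ↑y y.2)
            ((XT.codRestrict N hr) x)) = W (Zext ((XT.codRestrict N hr) x))
        rw [hU'X]
        have e1 : (XT.codRestrict N hr) (T x) = (⟨XT (T x), hr (T x)⟩ : ↥N) := by
          apply Subtype.ext; rfl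
        have e2 : (XT.codRestrict N hr) x = (⟨XT x, hr x⟩ : ↥N) := by
          apply Subtype.ext; rfl
        rw [e1, e2, hZkey, hZkey]
        exact ContinuousLinearMap.ext_iff.mp hY x
      have hfeq := Continuous.ext_on hdenseX'
        (Zext.comp ((Uz.comp N.subtypeL).codRestrict N fun y => hinv ↑y y.2)).continuous
        (W.comp Zext).continuous heq
      exact ContinuousLinearMap.ext fun y => congrFun hfeq y
    · -- factorization
      ext x
      have e2 : (XT.codRestrict N hr) x = (⟨XT x, hr x⟩ : ↥N) := by
        apply Subtype.ext; rfl
      show Y x = Zext ((XT.codRestrict N hr) x)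
      rw [e2, hZkey]
    · -- uniqueness
      intro Z' hZ'
      have heq : Set.EqOn (⇑Z') (⇑Zext) (Set.range ⇑(XT.codRestrict N hr)) := by
        rintro _ ⟨x, rfl⟩
        have e2 : (XT.codRestrict N hr) x = (⟨XT x, hr x⟩ : ↥N) := by
          apply Subtype.ext; rfl
        show Z' ((XT.codRestrict N hr) x) = Zext ((XT.codRestrict N hr) x)
        have h11 := ContinuousLinearMap.ext_iff.mp hZ'.2 x
        rw [e2, hZkey, h11]
        rfl
      have hfeq := Continuous.ext_on hdenseX' Z'.continuous Zext.continuous heq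
      exact ContinuousLinearMap.ext fun y => congrFun hfeq y
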